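/- arXiv:0902.3140 — 2 statements merged into one kernel-verified Lean document; each statement's English description precedes it below -/
import Mathlib

section
/- Let f be meromorphic on ℂ, let A ⊂ ℂ with Orb(A) bounded, let ε > 0 be such that B(Orb(A), 2ε) contains no poles of f, and let K > 1 bound |f'| from above on B(Orb(A), ε) (Euclidean metric). For x ∈ ℂ, let n(x) be the least integer n ≥ 1 such that dist(f^n(x), Orb(A)) > ε (assuming it exists). Then ε < K^{n(x)} · dist(f(x), Orb(A)); consequently there exist constants c₁, c₂ > 0, independent of x, with n(x) > −c₁ log dist(f(x), A) − c₂. -/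
open Metric MeasureTheory Filter Set Function Topology ENNReal NNReal

noncomputable section
attribute [local instance] Classical.propDecidable

/-- An abstract model of the Riemann sphere `Ĉ`: a compact metric space carrying the
spherical (chordal) metric, an open embedding `ι` of `ℂ` whose complement is the single
point `infty`, and the inversion `z ↦ 1/z` as a global homeomorphism. -/
structure SphereModel (𝕊 : Type) [MetricSpace 𝕊] [CompactSpace 𝕊] where
  ι : ℂ → 𝕊
  infty : 𝕊
  continuous_ι : Continuous ι
  injective_ι : Function.Injective ι
  range_ι : Set.range ι = {infty}ᶜ
  isOpenMap_ι : IsOpenMap ι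
  sphereInv : 𝕊 → 𝕊
  continuous_sphereInv : Continuous sphereInv
  sphereInv_invol : ∀ x, sphereInv (sphereInv x) = x
  sphereInv_ι : ∀ z : ℂ, z ≠ 0 → sphereInv (ι z) = ι z⁻¹
  sphereInv_zero : sphereInv (ι 0) = infty
  sphereInv_infty : sphereInv infty = ι 0
  dist_ι : ∀ z w : ℂ,
    dist (ι z) (ι w) = 2 * dist z w / (Real.sqrt (1 + ‖z‖ ^ 2) * Real.sqrt (1 + ‖w‖ ^ 2))
  dist_infty : ∀ z : ℂ, dist (ι z) infty = 2 / Real.sqrt (1 + ‖z‖ ^ 2)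

namespace SphereModel

variable {𝕊 : Type} [MetricSpace 𝕊] [CompactSpace 𝕊]

/-- The partially defined inverse of `ι` (junk value at `infty`). -/
def toC (S : SphereModel 𝕊) : 𝕊 → ℂ := Function.invFun S.ι

/-- The standard chart of the sphere around a point: the identity chart away from
`infty` and the chart `z ↦ 1/z` at `infty`. -/
def chart (S : SphereModel 𝕊) (w : 𝕊) : 𝕊 → ℂ :=
  if w = S.infty then S.toC ∘ S.sphereInv else S.toC

/-- Local inverse of `chart`. -/
def chartInv (S : SphereModel 𝕊) (w : 𝕊) : ℂ → 𝕊 :=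
  if w = S.infty then S.sphereInv ∘ S.ι else S.ι

/-- `f : 𝕊 → 𝕊` is holomorphic at `x`, read through the standard charts. -/
def HolAt (S : SphereModel 𝕊) (f : 𝕊 → 𝕊) (x : 𝕊) : Prop :=
  ContinuousAt f x ∧ AnalyticAt ℂ (S.chart (f x) ∘ f ∘ S.chartInv x) (S.chart x x)

/-- `f` represents a meromorphic function `ℂ → Ĉ`: it is holomorphic (as a sphere-valued
map) at every point of `ℂ`.  (The value of `f` at `infty` is junk.) -/
def MeromorphicDyn (S : SphereModel 𝕊) (f : 𝕊 → 𝕊) : Prop :=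
  ∀ z : ℂ, S.HolAt f (S.ι z)

/-- `f` represents a transcendental meromorphic function: it is meromorphic on `ℂ` and
admits no holomorphic extension at `infty`. -/
def TranscendentalDyn (S : SphereModel 𝕊) (f : 𝕊 → 𝕊) : Prop :=
  S.MeromorphicDyn f ∧
    ¬ ∃ g : 𝕊 → 𝕊, (∀ z : ℂ, g (S.ι z) = f (S.ι z)) ∧ S.HolAt g S.infty

/-- `f` represents a rational map of degree at least `2`: holomorphic on the whole sphere,
non-constant and non-injective. -/
def RationalDegGe2 (S : SphereModel 𝕊) (f : 𝕊 → 𝕊) : Prop :=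
  (∀ x, S.HolAt f x) ∧ (∀ c, f ≠ fun _ => c) ∧ ¬ Function.Injective f

/-- `f` is a transcendental meromorphic function or a rational map of degree `≥ 2`. -/
def MeroOrRat (S : SphereModel 𝕊) (f : 𝕊 → 𝕊) : Prop :=
  S.TranscendentalDyn f ∨ S.RationalDegGe2 f

/-- The domain of holomorphy of `f` (`ℂ` for transcendental maps, `Ĉ` for rational ones). -/
def dom (S : SphereModel 𝕊) (f : 𝕊 → 𝕊) : Set 𝕊 := {x | S.HolAt f x}

/-- `f^[n] z` is defined (all earlier iterates lie in the domain of `f`). -/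
def DefinedUpTo (S : SphereModel 𝕊) (f : 𝕊 → 𝕊) (z : 𝕊) (n : ℕ) : Prop :=
  ∀ i < n, f^[i] z ∈ S.dom f

/-- The (partially defined) forward orbit of a point. -/
def orb (S : SphereModel 𝕊) (f : 𝕊 → 𝕊) (z : 𝕊) : Set 𝕊 :=
  {w | ∃ n, S.DefinedUpTo f z n ∧ f^[n] z = w}

/-- The forward orbit of a set. -/
def orbSet (S : SphereModel 𝕊) (f : 𝕊 → 𝕊) (A : Set 𝕊) : Set 𝕊 :=
  ⋃ z ∈ A, S.orb f z

/-- The Fatou set: points with a neighbourhood on which all iterates are defined and form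
a normal family (equivalently, on the compact sphere, an equicontinuous family). -/
def fatou (S : SphereModel 𝕊) (f : 𝕊 → 𝕊) : Set 𝕊 :=
  {x | ∃ U ∈ 𝓝 x, (∀ y ∈ U, ∀ n, S.DefinedUpTo f y n) ∧
      EquicontinuousOn (fun n : ℕ => f^[n]) U}

/-- The Julia set: the complement of the Fatou set. -/
def julia (S : SphereModel 𝕊) (f : 𝕊 → 𝕊) : Set 𝕊 := (S.fatou f)ᶜ

/-- Singular values: `v` is not singular iff it has an open neighbourhood `W` on which
all inverse branches of `f` are well-defined univalent maps. -/
def singularValues (S : SphereModel 𝕊) (f : 𝕊 → 𝕊) : Set 𝕊 :=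
  {v | ¬ ∃ W : Set 𝕊, IsOpen W ∧ v ∈ W ∧
      ∀ x ∈ S.dom f, f x ∈ W →
        ∃ g : 𝕊 → 𝕊, ContinuousOn g W ∧ Set.InjOn g W ∧ g (f x) = x ∧
          ∀ w ∈ W, g w ∈ S.dom f ∧ f (g w) = w}

/-- The post-singular set `P(f)`. -/
def postSingular (S : SphereModel 𝕊) (f : 𝕊 → 𝕊) : Set 𝕊 :=
  closure (S.orbSet f (S.singularValues f))

end SphereModel

/-- The ω-limit set of a point under iteration. -/
def omegaLimitSet {α : Type*} [TopologicalSpace α] (f : α → α) (z : α) : Set α :=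
  ⋂ n : ℕ, closure {w | ∃ k, n ≤ k ∧ f^[k] z = w}

/-- A nice set: an open set such that no boundary point ever enters the set. -/
def IsNice {α : Type*} [TopologicalSpace α] (f : α → α) (U : Set α) : Prop :=
  IsOpen U ∧ ∀ n : ℕ, 0 < n → f^[n] '' frontier U ∩ U = ∅

/-- The norm of the derivative of `f` at `x` with respect to the underlying metric,
defined as the limsup of difference quotients (possibly `∞`). -/
def ednorm {α : Type*} [MetricSpace α] (f : α → α) (x : α) : ℝ≥0∞ :=
  Filter.limsup (fun y => edist (f y) (f x) / edist y x) (𝓝[≠] x)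

/-- The norm of the derivative with respect to the Euclidean metric, read through `ι`
(`∞` at `infty` and at poles). -/
def ednormEuc {𝕊 : Type} [MetricSpace 𝕊] [CompactSpace 𝕊] (S : SphereModel 𝕊)
    (f : 𝕊 → 𝕊) (x : 𝕊) : ℝ≥0∞ :=
  if x = S.infty ∨ f x = S.infty then ⊤
  else ENNReal.ofReal ‖deriv (fun w => S.toC (f (S.ι w))) (S.toC x)‖

/-- The family `𝒱_n(U, z, R)` of pullbacks of `U` by `f^n` that extend univalently over
`B(z,R)`. -/
def pullbackFam {α : Type*} [MetricSpace α] (f : α → α) (U : Set α) (z : α) (R : ℝ)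
    (n : ℕ) : Set (Set α) :=
  {V | IsOpen V ∧ f^[n] '' V = U ∧
    ∃ V' : Set α, V ⊆ V' ∧ IsConnected V' ∧ Set.InjOn (f^[n]) V' ∧
      f^[n] '' V' = Metric.ball z R}

/-- A `(t,p)`-conformal measure for `f`, with respect to the derivative norm `nd`
(spherical or Euclidean): finite on compact sets disjoint from the post-singular set,
with Jacobian `exp p * nd ^ t` wherever the latter is finite (`0 ^ 0 = 1` by the
`ENNReal.rpow` convention), and `m {x} = 0`, `m {f x}` zero or finite whenever
`nd x ^ t = ∞`. -/
def IsConformalMeasure {𝕊 : Type} [MetricSpace 𝕊] [CompactSpace 𝕊] [MeasurableSpace 𝕊]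
    (S : SphereModel 𝕊) (f : 𝕊 → 𝕊) (t p : ℝ) (nd : 𝕊 → ℝ≥0∞) (m : Measure 𝕊) : Prop :=
  (∀ K : Set 𝕊, IsCompact K → Disjoint K (S.postSingular f) → m K < ⊤) ∧
  (∀ A : Set 𝕊, MeasurableSet A → A ⊆ S.dom f → Set.InjOn f A →
      (∀ x ∈ A, nd x ^ t ≠ ⊤) →
      m (f '' A) = ∫⁻ x in A, ENNReal.ofReal (Real.exp p) * nd x ^ t ∂m) ∧
  (∀ x, nd x ^ t = ⊤ → m {x} = 0 ∧ (m {f x} = 0 ∨ m {f x} < ⊤))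

/-- The set `E` of univalently inaccessible points. -/
def univInaccessible {𝕊 : Type} [MetricSpace 𝕊] [CompactSpace 𝕊] (S : SphereModel 𝕊)
    (f : 𝕊 → 𝕊) : Set 𝕊 :=
  {z | ∃ U : Set 𝕊, IsOpen U ∧ (U ∩ S.julia f).Nonempty ∧
    ¬ ∃ (y : 𝕊) (n k : ℕ), y ∈ U ∧ f^[n] z = f^[k] y ∧
      0 < ednorm (f^[n]) z * ednorm (f^[k]) y ∧
      ednorm (f^[n]) z * ednorm (f^[k]) y < ⊤}

/-- A holomorphic inverse branch of `f^{-n}` on `W`. -/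
def IsInvBranch {𝕊 : Type} [MetricSpace 𝕊] [CompactSpace 𝕊] (S : SphereModel 𝕊)
    (f : 𝕊 → 𝕊) (n : ℕ) (W : Set 𝕊) (g : 𝕊 → 𝕊) : Prop :=
  (∀ w ∈ W, S.HolAt g w) ∧ ∀ w ∈ W, f^[n] (g w) = w

/-- The multiplier of `f^[n]` at a point `z`, computed in the standard chart at `z`. -/
def SphereModel.multiplier {𝕊 : Type} [MetricSpace 𝕊] [CompactSpace 𝕊]
    (S : SphereModel 𝕊) (f : 𝕊 → 𝕊) (n : ℕ) (z : 𝕊) : ℂ :=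
  deriv (S.chart z ∘ f^[n] ∘ S.chartInv z) (S.chart z z)

/-- A parabolic periodic point: a periodic point whose cycle has multiplier a root of
unity. -/
def IsParabolicPeriodic {𝕊 : Type} [MetricSpace 𝕊] [CompactSpace 𝕊] (S : SphereModel 𝕊)
    (f : 𝕊 → 𝕊) (z : 𝕊) : Prop :=
  ∃ n : ℕ, 0 < n ∧ f^[n] z = z ∧ ∃ k : ℕ, 0 < k ∧ S.multiplier f n z ^ k = 1

/-- `x` returns to `U` under iteration of `f`. -/
def Returns {α : Type*} (f : α → α) (U : Set α) (x : α) : Prop :=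
  ∃ k, 1 ≤ k ∧ f^[k] x ∈ U

/-- The first return time to `U` (junk value `0` if the point never returns). -/
def returnTime {α : Type*} (f : α → α) (U : Set α) (x : α) : ℕ :=
  sInf {k | 1 ≤ k ∧ f^[k] x ∈ U}

/-- The first return map to `U` (the identity where undefined). -/
def firstReturn {α : Type*} (f : α → α) (U : Set α) (x : α) : α :=
  f^[returnTime f U x] x

/-- The domain of the first return map. -/
def returnDom {α : Type*} (f : α → α) (U : Set α) : Set α :=
  {x ∈ U | Returns f U x}

/-- `Λ_U = ⋂_{k ≥ 0} φ_U^{-k}(U)`: points all of whose iterates under the first return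
map are defined (and in `U`). -/
def LambdaSet {α : Type*} (f : α → α) (U : Set α) : Set α :=
  {x | ∀ k : ℕ, (firstReturn f U)^[k] x ∈ returnDom f U}

/-- `φ_U^{-k}(A)`, taking definedness of the first return map into account. -/
def phiPreimage {α : Type*} (f : α → α) (U : Set α) (k : ℕ) (A : Set α) : Set α :=
  {x | (∀ i < k, (firstReturn f U)^[i] x ∈ returnDom f U) ∧ (firstReturn f U)^[k] x ∈ A}

/-- Euclidean distance from a point of the sphere to a subset of `ℂ` (`∞` at `infty`). -/
def SphereModel.eDistToSet {𝕊 : Type} [MetricSpace 𝕊] [CompactSpace 𝕊]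
    (S : SphereModel 𝕊) (y : 𝕊) (B : Set ℂ) : ℝ≥0∞ :=
  if y = S.infty then ⊤ else ENNReal.ofReal (Metric.infDist (S.toC y) B)

/-- Euclidean distance `dist (f z, a)` (junk value `1` at poles, where the true distance
is infinite; note `log (1/1) = 0 = log⁺ (1/∞)`). -/
def SphereModel.fDist {𝕊 : Type} [MetricSpace 𝕊] [CompactSpace 𝕊] (S : SphereModel 𝕊)
    (f : 𝕊 → 𝕊) (a : ℂ) (z : ℂ) : ℝ :=
  if f (S.ι z) = S.infty then 1 else dist (S.toC (f (S.ι z))) a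

/-- Euclidean distance `dist (f z, A)` to a set (junk value `1` at poles). -/
def SphereModel.fDistSet {𝕊 : Type} [MetricSpace 𝕊] [CompactSpace 𝕊] (S : SphereModel 𝕊)
    (f : 𝕊 → 𝕊) (A : Set ℂ) (z : ℂ) : ℝ :=
  if f (S.ι z) = S.infty then 1 else Metric.infDist (S.toC (f (S.ι z))) A

/-- A subset of the sphere which is a bounded subset of `ℂ`. -/
def SphereModel.BoundedInC {𝕊 : Type} [MetricSpace 𝕊] [CompactSpace 𝕊]
    (S : SphereModel 𝕊) (U : Set 𝕊) : Prop :=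
  ∃ B : Set ℂ, Bornology.IsBounded B ∧ U = S.ι '' B

end

/-- The set of times `n ≥ 1` at which the orbit of `x` is defined and is farther than
`ε` (in the Euclidean metric) from the set `OA ⊆ ℂ`. -/
def escapeSet {𝕊 : Type} [MetricSpace 𝕊] [CompactSpace 𝕊] (S : SphereModel 𝕊)
    (f : 𝕊 → 𝕊) (OA : Set ℂ) (ε : ℝ) (x : ℂ) : Set ℕ :=
  {n | 1 ≤ n ∧ S.DefinedUpTo f (S.ι x) n ∧
    ENNReal.ofReal ε < S.eDistToSet (f^[n] (S.ι x)) OA}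

/-- `n(x)`: the least `n ≥ 1` with `dist (f^n x, Orb A) > ε`. -/
noncomputable def escapeTime {𝕊 : Type} [MetricSpace 𝕊] [CompactSpace 𝕊] (S : SphereModel 𝕊)
    (f : 𝕊 → 𝕊) (OA : Set ℂ) (ε : ℝ) (x : ℂ) : ℕ :=
  sInf (escapeSet S f OA ε x)


section EscapeAux

open Metric

variable {𝕊 : Type} [MetricSpace 𝕊] [CompactSpace 𝕊]

lemma SphereModel.toC_ι (S : SphereModel 𝕊) (z : ℂ) : S.toC (S.ι z) = z :=
  Function.leftInverse_invFun S.injective_ι z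

lemma SphereModel.ι_ne_infty (S : SphereModel 𝕊) (z : ℂ) : S.ι z ≠ S.infty := by
  have h : S.ι z ∈ Set.range S.ι := ⟨z, rfl⟩
  rw [S.range_ι] at h
  simpa using h

lemma SphereModel.ι_toC (S : SphereModel 𝕊) {y : 𝕊} (hy : y ≠ S.infty) :
    S.ι (S.toC y) = y := by
  have h : y ∈ Set.range S.ι := by rw [S.range_ι]; simpa using hy
  obtain ⟨w, hw⟩ := h
  rw [← hw, S.toC_ι]

lemma escape_analyticAt_aux (S : SphereModel 𝕊) (f : 𝕊 → 𝕊) (hf : S.MeromorphicDyn f)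
    (z : ℂ) (hz : f (S.ι z) ≠ S.infty) :
    AnalyticAt ℂ (fun w => S.toC (f (S.ι w))) z := by
  obtain ⟨-, ha⟩ := hf z
  simp only [SphereModel.chart, SphereModel.chartInv, hz, S.ι_ne_infty, if_false, S.toC_ι,
    if_neg] at ha
  exact ha

lemma escape_orbit_step (S : SphereModel 𝕊) (f : 𝕊 → 𝕊) (hf : S.MeromorphicDyn f)
    (A OA : Set ℂ) (hOA : S.ι '' OA = S.orbSet f (S.ι '' A))
    {a : ℂ} (ha : a ∈ OA) : S.toC (f (S.ι a)) ∈ OA := by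
  have h1 : S.ι a ∈ S.orbSet f (S.ι '' A) := by
    rw [← hOA]; exact ⟨a, ha, rfl⟩
  obtain ⟨z₀, hz₀, m, hdef, hm⟩ :
      ∃ z₀ ∈ S.ι '' A, ∃ m, S.DefinedUpTo f z₀ m ∧ f^[m] z₀ = S.ι a := by
    simpa [SphereModel.orbSet, SphereModel.orb] using h1
  have hmem : f (S.ι a) ∈ S.orbSet f (S.ι '' A) := by
    refine Set.mem_biUnion hz₀ ⟨m + 1, ?_, ?_⟩
    · intro i hi
      rcases Nat.lt_succ_iff_lt_or_eq.1 hi with h | h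
      · exact hdef i h
      · subst h; rw [hm]; exact hf a
    · rw [Function.iterate_succ_apply', hm]
  rw [← hOA] at hmem
  obtain ⟨b, hb, hba⟩ := hmem
  rw [← hba, S.toC_ι]; exact hb

set_option maxHeartbeats 1000000 in
lemma escape_key_step (S : SphereModel 𝕊) (f : 𝕊 → 𝕊) (hf : S.MeromorphicDyn f)
    (A OA : Set ℂ) (hOA : S.ι '' OA = S.orbSet f (S.ι '' A))
    (ε : ℝ) (hε : 0 < ε)
    (hpoles : ∀ z : ℂ, Metric.infDist z OA < 2 * ε → f (S.ι z) ≠ S.infty)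
    (K : ℝ) (hK : 1 < K)
    (hderiv : ∀ z : ℂ, Metric.infDist z OA < ε →
      ‖deriv (fun w => S.toC (f (S.ι w))) z‖ ≤ K)
    {z : ℂ} (hz : infDist z OA ≤ ε) :
    f (S.ι z) ≠ S.infty ∧
      infDist (S.toC (f (S.ι z))) OA ≤ K * infDist z OA := by
  set g : ℂ → ℂ := fun w => S.toC (f (S.ι w)) with hg
  have hKpos : 0 < K := lt_trans one_pos hK
  have hfz : f (S.ι z) ≠ S.infty := hpoles z (lt_of_le_of_lt hz (by linarith))
  refine ⟨hfz, ?_⟩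
  rcases OA.eq_empty_or_nonempty with hOAe | hOAne
  · rw [hOAe] at hz ⊢
    simp only [Metric.infDist_empty, mul_zero, le_refl]
  refine le_of_forall_pos_le_add fun η hη => ?_
  have hga : AnalyticAt ℂ g z := escape_analyticAt_aux S f hf z hfz
  have hgc : ContinuousAt g z := hga.continuousAt
  obtain ⟨ρ, hρ, hρ'⟩ := Metric.continuousAt_iff.1 hgc (η / 2) (by positivity)
  set δ : ℝ := min (ρ / 2) (η / (2 * K)) with hδdef
  have hδ : 0 < δ := by positivity
  set d : ℝ := infDist z OA with hd
  have hd0 : 0 ≤ d := Metric.infDist_nonneg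
  obtain ⟨a, haOA, hdza⟩ := (Metric.infDist_lt_iff hOAne).1 (show d < d + δ by linarith)
  set t : ℝ := ε / (ε + δ) with ht
  have ht0 : 0 < t := by positivity
  have ht1 : t ≤ 1 := by
    rw [div_le_one (by positivity)]; linarith
  have hL : dist z a < ε + δ := lt_of_lt_of_le hdza (by linarith)
  set z' : ℂ := a + (t : ℂ) * (z - a) with hz'
  have hdz'a : dist z' a = t * dist z a := by
    rw [dist_eq_norm, dist_eq_norm]
    have : z' - a = (t : ℂ) * (z - a) := by rw [hz']; ring
    rw [this, norm_mul, Complex.norm_real, Real.norm_eq_abs, abs_of_pos ht0]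
  have hdz'a_lt : dist z' a < ε := by
    rw [hdz'a]
    calc t * dist z a < t * (ε + δ) := mul_lt_mul_of_pos_left hL ht0
      _ = ε := by rw [ht]; field_simp
  have hseg : ∀ w ∈ segment ℝ a z', infDist w OA < ε := by
    intro w hw
    have hmem := (convex_closedBall a (dist z' a)).segment_subset
      (Metric.mem_closedBall_self dist_nonneg) (Metric.mem_closedBall.2 le_rfl) hw
    have hwa : dist w a ≤ dist z' a := Metric.mem_closedBall.1 hmem
    calc infDist w OA ≤ dist w a := Metric.infDist_le_dist_of_mem haOA
      _ ≤ dist z' a := hwa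
      _ < ε := hdz'a_lt
  have hdiff : ∀ w ∈ segment ℝ a z', DifferentiableAt ℂ g w := fun w hw =>
    (escape_analyticAt_aux S f hf w (hpoles w (by linarith [hseg w hw]))).differentiableAt
  have hbound : ∀ w ∈ segment ℝ a z', ‖deriv g w‖ ≤ K := fun w hw => hderiv w (hseg w hw)
  have hmvt : ‖g z' - g a‖ ≤ K * ‖z' - a‖ :=
    (convex_segment a z').norm_image_sub_le_of_norm_deriv_le hdiff hbound
      (left_mem_segment ℝ a z') (right_mem_segment ℝ a z')
  have h1 : dist (g z') (g a) ≤ K * (d + δ) := by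
    rw [dist_eq_norm]
    refine le_trans hmvt (mul_le_mul_of_nonneg_left ?_ hKpos.le)
    have : ‖z' - a‖ = t * dist z a := by rw [← dist_eq_norm]; exact hdz'a
    rw [this]
    nlinarith [dist_nonneg (x := z) (y := a)]
  have h2 : dist (g z) (g z') < η / 2 := by
    have hzz' : dist z z' < ρ := by
      have he : z - z' = ((1 - t : ℝ) : ℂ) * (z - a) := by
        rw [hz']; push_cast; ring
      have : dist z z' = (1 - t) * dist z a := by
        rw [dist_eq_norm, he, norm_mul, Complex.norm_real, Real.norm_eq_abs,
          abs_of_nonneg (by linarith), dist_eq_norm]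
      rw [this]
      have h1t : (1 - t) * (ε + δ) = δ := by rw [ht]; field_simp; ring
      have : (1 - t) * dist z a ≤ (1 - t) * (ε + δ) :=
        mul_le_mul_of_nonneg_left hL.le (by linarith)
      have hδρ : δ ≤ ρ / 2 := min_le_left _ _
      linarith
    have h2' := hρ' (show dist z' z < ρ by rwa [dist_comm])
    rwa [dist_comm (g z) (g z')]
  have hgaOA : g a ∈ OA := escape_orbit_step S f hf A OA hOA haOA
  have hKδ : K * δ ≤ η / 2 := by
    have h := min_le_right (ρ / 2) (η / (2 * K))
    calc K * δ ≤ K * (η / (2 * K)) := mul_le_mul_of_nonneg_left h hKpos.le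
      _ = η / 2 := by field_simp [hKpos.ne']
  calc infDist (g z) OA ≤ dist (g z) (g a) := Metric.infDist_le_dist_of_mem hgaOA
    _ ≤ dist (g z) (g z') + dist (g z') (g a) := dist_triangle _ _ _
    _ ≤ η / 2 + K * (d + δ) := by linarith
    _ ≤ K * d + η := by nlinarith

end EscapeAux


section EscapeMain

open Metric

variable {𝕊 : Type} [MetricSpace 𝕊] [CompactSpace 𝕊]

lemma escape_main_est (S : SphereModel 𝕊) (f : 𝕊 → 𝕊) (hf : S.MeromorphicDyn f)
    (A OA : Set ℂ) (hOA : S.ι '' OA = S.orbSet f (S.ι '' A))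
    (ε : ℝ) (hε : 0 < ε)
    (hpoles : ∀ z : ℂ, Metric.infDist z OA < 2 * ε → f (S.ι z) ≠ S.infty)
    (K : ℝ) (hK : 1 < K)
    (hderiv : ∀ z : ℂ, Metric.infDist z OA < ε →
      ‖deriv (fun w => S.toC (f (S.ι w))) z‖ ≤ K)
    (x : ℂ) (hne : (escapeSet S f OA ε x).Nonempty) (hx : f (S.ι x) ≠ S.infty) :
    ε < K ^ escapeTime S f OA ε x * infDist (S.toC (f (S.ι x))) OA := by
  have hKpos : 0 < K := lt_trans one_pos hK
  set n : ℕ := escapeTime S f OA ε x with hn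
  have hnmem : n ∈ escapeSet S f OA ε x := Nat.sInf_mem hne
  obtain ⟨hn1, hndef, hngt⟩ := hnmem
  set d₁ : ℝ := infDist (S.toC (f (S.ι x))) OA with hd₁
  have claim : ∀ j, 1 ≤ j → j ≤ n → f^[j] (S.ι x) ≠ S.infty ∧
      infDist (S.toC (f^[j] (S.ι x))) OA ≤ K ^ (j - 1) * d₁ := by
    intro j hj
    induction j, hj using Nat.le_induction with
    | base =>
      intro _
      refine ⟨by simpa using hx, ?_⟩
      simp only [Function.iterate_one, Nat.sub_self, pow_zero, one_mul, le_refl, hd₁]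
    | succ j hj ih =>
      intro hjn
      have hjn' : j ≤ n := le_trans (Nat.le_succ j) hjn
      obtain ⟨hne', hle⟩ := ih hjn'
      have hjlt : j < n := lt_of_lt_of_le (Nat.lt_succ_self j) hjn
      have hnot : j ∉ escapeSet S f OA ε x := Nat.notMem_of_lt_sInf hjlt
      have hdefj : S.DefinedUpTo f (S.ι x) j := fun i hi => hndef i (lt_of_lt_of_le hi hjn')
      have hedle : S.eDistToSet (f^[j] (S.ι x)) OA ≤ ENNReal.ofReal ε := by
        by_contra h
        exact hnot ⟨hj, hdefj, lt_of_not_ge h⟩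
      have hdj : infDist (S.toC (f^[j] (S.ι x))) OA ≤ ε := by
        rw [SphereModel.eDistToSet, if_neg hne'] at hedle
        exact (ENNReal.ofReal_le_ofReal_iff hε.le).1 hedle
      obtain ⟨h1, h2⟩ := escape_key_step S f hf A OA hOA ε hε hpoles K hK hderiv hdj
      rw [S.ι_toC hne', ← Function.iterate_succ_apply' f j (S.ι x)] at h1 h2
      refine ⟨h1, ?_⟩
      have hstep : K * infDist (S.toC (f^[j] (S.ι x))) OA ≤ K * (K ^ (j - 1) * d₁) :=
        mul_le_mul_of_nonneg_left hle hKpos.le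
      have hpow : K * (K ^ (j - 1) * d₁) = K ^ (j + 1 - 1) * d₁ := by
        rw [← mul_assoc, ← pow_succ']
        congr 2
        omega
      calc infDist (S.toC (f^[j + 1] (S.ι x))) OA ≤ K * infDist (S.toC (f^[j] (S.ι x))) OA := h2
        _ ≤ K * (K ^ (j - 1) * d₁) := hstep
        _ = K ^ (j + 1 - 1) * d₁ := hpow
  obtain ⟨hnne, hnle⟩ := claim n hn1 le_rfl
  rw [SphereModel.eDistToSet, if_neg hnne] at hngt
  have hεdn : ε < infDist (S.toC (f^[n] (S.ι x))) OA := by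
    have h0 : 0 ≤ infDist (S.toC (f^[n] (S.ι x))) OA := Metric.infDist_nonneg
    by_contra h
    push_neg at h
    exact absurd hngt (not_lt.2 (ENNReal.ofReal_le_ofReal h))
  have hεK : ε < K ^ (n - 1) * d₁ := lt_of_lt_of_le hεdn hnle
  have hd₁pos : 0 < d₁ := by
    by_contra h
    push_neg at h
    nlinarith [pow_pos hKpos (n - 1)]
  have hpowle : K ^ (n - 1) ≤ K ^ n := pow_le_pow_right₀ hK.le (Nat.sub_le n 1)
  calc ε < K ^ (n - 1) * d₁ := hεK
    _ ≤ K ^ n * d₁ := mul_le_mul_of_nonneg_right hpowle hd₁pos.le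

end EscapeMain

/-- **Escape time estimate** (proof of Theorem 1.3).  If `Orb A` is bounded, the
`2ε`-neighbourhood of `Orb A` contains no poles, and `|f'| ≤ K` on its
`ε`-neighbourhood, then `ε < K^{n(x)} dist (f x, Orb A)`, and consequently
`n(x) > -c₁ log dist (f x, A) - c₂` for constants `c₁, c₂ > 0` independent of `x`. -/
theorem escape_time_lower_bound {𝕊 : Type} [MetricSpace 𝕊] [CompactSpace 𝕊]
    (S : SphereModel 𝕊) (f : 𝕊 → 𝕊) (hf : S.MeromorphicDyn f)
    (A OA : Set ℂ) (hOA : S.ι '' OA = S.orbSet f (S.ι '' A))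
    (hbdd : Bornology.IsBounded OA)
    (ε : ℝ) (hε : 0 < ε)
    (hpoles : ∀ z : ℂ, Metric.infDist z OA < 2 * ε → f (S.ι z) ≠ S.infty)
    (K : ℝ) (hK : 1 < K)
    (hderiv : ∀ z : ℂ, Metric.infDist z OA < ε →
      ‖deriv (fun w => S.toC (f (S.ι w))) z‖ ≤ K) :
    (∀ x : ℂ, (escapeSet S f OA ε x).Nonempty →
      ENNReal.ofReal ε <
        ENNReal.ofReal K ^ escapeTime S f OA ε x * S.eDistToSet (f (S.ι x)) OA) ∧
    ∃ c₁ > (0:ℝ), ∃ c₂ > (0:ℝ), ∀ x : ℂ, (escapeSet S f OA ε x).Nonempty →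
      -(c₁ * Real.log ((S.eDistToSet (f (S.ι x)) A).toReal)) - c₂ <
        (escapeTime S f OA ε x : ℝ) := by
  have hKpos : 0 < K := lt_trans one_pos hK
  have hAOA : A ⊆ OA := by
    intro a ha
    have hmem : S.ι a ∈ S.orbSet f (S.ι '' A) :=
      Set.mem_biUnion ⟨a, ha, rfl⟩ ⟨0, fun i hi => absurd hi (Nat.not_lt_zero i), rfl⟩
    rw [← hOA] at hmem
    obtain ⟨b, hb, hba⟩ := hmem
    rwa [← S.injective_ι hba]
  have part1 : ∀ x : ℂ, (escapeSet S f OA ε x).Nonempty →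
      ENNReal.ofReal ε <
        ENNReal.ofReal K ^ escapeTime S f OA ε x * S.eDistToSet (f (S.ι x)) OA := by
    intro x hne
    by_cases hx : f (S.ι x) = S.infty
    · rw [SphereModel.eDistToSet, if_pos hx, ENNReal.mul_top]
      · exact ENNReal.ofReal_lt_top
      · exact pow_ne_zero _ (ENNReal.ofReal_pos.2 hKpos).ne'
    · have hmain := escape_main_est S f hf A OA hOA ε hε hpoles K hK hderiv x hne hx
      rw [SphereModel.eDistToSet, if_neg hx, ← ENNReal.ofReal_pow hKpos.le,
        ← ENNReal.ofReal_mul (pow_nonneg hKpos.le _)]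
      exact (ENNReal.ofReal_lt_ofReal_iff (lt_trans hε hmain)).2 hmain
  refine ⟨part1, ?_⟩
  have hlK : 0 < Real.log K := Real.log_pos hK
  set c₁ : ℝ := 1 / Real.log K with hc₁
  have hc₁pos : 0 < c₁ := by positivity
  set c₂ : ℝ := c₁ * |Real.log ε| + 1 with hc₂
  have hc₂pos : 0 < c₂ := by positivity
  refine ⟨c₁, hc₁pos, c₂, hc₂pos, fun x hne => ?_⟩
  set n : ℕ := escapeTime S f OA ε x with hn
  have hn0 : (0 : ℝ) ≤ (n : ℝ) := Nat.cast_nonneg n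
  by_cases hx : f (S.ι x) = S.infty
  · rw [SphereModel.eDistToSet, if_pos hx]
    simp only [ENNReal.toReal_top, Real.log_zero, mul_zero, neg_zero, zero_sub]
    linarith
  · have hmain := escape_main_est S f hf A OA hOA ε hε hpoles K hK hderiv x hne hx
    rcases A.eq_empty_or_nonempty with hAe | hAne
    · exfalso
      have hOAe : OA = ∅ := by
        have h1 : S.ι '' OA = ∅ := by
          rw [hOA, hAe]
          simp [SphereModel.orbSet]
        exact Set.image_eq_empty.1 h1
      rw [hOAe, Metric.infDist_empty, mul_zero] at hmain
      linarith
    have hd₁d : infDist (S.toC (f (S.ι x))) OA ≤ infDist (S.toC (f (S.ι x))) A :=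
      Metric.infDist_le_infDist_of_subset hAOA hAne
    set d : ℝ := infDist (S.toC (f (S.ι x))) A with hd
    have hd0 : 0 ≤ d := Metric.infDist_nonneg
    have hεKd : ε < K ^ n * d := by
      have hKn : 0 < K ^ n := pow_pos hKpos n
      nlinarith
    have hdpos : 0 < d := by
      by_contra h
      push_neg at h
      nlinarith [pow_pos hKpos n]
    rw [SphereModel.eDistToSet, if_neg hx, ENNReal.toReal_ofReal hd0]
    have hlog : Real.log ε < (n : ℝ) * Real.log K + Real.log d := by
      have h1 : Real.log ε < Real.log (K ^ n * d) := Real.log_lt_log hε hεKd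
      rwa [Real.log_mul (pow_ne_zero n hKpos.ne') hdpos.ne', Real.log_pow] at h1
    have hmul : c₁ * Real.log ε - c₁ * Real.log d < (n : ℝ) := by
      have h2 : c₁ * (Real.log ε - Real.log d) < c₁ * ((n : ℝ) * Real.log K) :=
        mul_lt_mul_of_pos_left (by linarith) hc₁pos
      have h3 : c₁ * Real.log K = 1 := by
        rw [hc₁]; field_simp
      nlinarith
    have habs : -|Real.log ε| ≤ Real.log ε := neg_abs_le _
    nlinarith
end

section
/- Let f : ℂ → Ĉ be meromorphic with a pole p of order M ≥ 1, and let μ = ρ·m be an f-invariant measure absolutely continuous with respect to Euclidean Lebesgue measure m, whose density ρ is bounded away from zero on a neighbourhood of p. Then there exist c > 0 and r₀ > 0 such that ρ(z) > c / |z|^{2 + 2/M} for (m-almost) all z with |z| ≥ r₀. -/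
open Metric MeasureTheory Filter Set Function Topology ENNReal NNReal

noncomputable section
attribute [local instance] Classical.propDecidable

end

open MeasureTheory
noncomputable section

lemma auxDet (d : ℂ) :
    ((ContinuousLinearMap.smulRight (1 : ℂ →L[ℂ] ℂ) d).restrictScalars ℝ).det
      = Complex.normSq d := by
  have : ((ContinuousLinearMap.smulRight (1 : ℂ →L[ℂ] ℂ) d).restrictScalars ℝ).det
      = LinearMap.det (((ContinuousLinearMap.smulRight (1 : ℂ →L[ℂ] ℂ) d).restrictScalars
        ℝ) : ℂ →ₗ[ℝ] ℂ) := rfl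
  rw [this, ← LinearMap.det_toMatrix Complex.basisOneI, Matrix.det_fin_two]
  simp [LinearMap.toMatrix_apply, Complex.normSq_apply]

lemma auxInvSlit {z : ℂ} (hz : z ∈ Complex.slitPlane) : z⁻¹ ∈ Complex.slitPlane := by
  have hz0 : z ≠ 0 := Complex.slitPlane_ne_zero hz
  have hns : 0 < Complex.normSq z := Complex.normSq_pos.2 hz0
  rw [Complex.mem_slitPlane_iff] at hz ⊢
  rcases hz with h | h
  · exact Or.inl (by rw [Complex.inv_re]; positivity)
  · refine Or.inr ?_
    rw [Complex.inv_im]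
    simpa using div_ne_zero (neg_ne_zero.mpr h) (ne_of_gt hns)

lemma auxSlitCompl : volume (Complex.slitPlaneᶜ) = 0 := by
  have hsub : Complex.slitPlaneᶜ ⊆ (Submodule.span ℝ {(1:ℂ)} : Submodule ℝ ℂ) := by
    intro z hz
    rw [Set.mem_compl_iff, Complex.mem_slitPlane_iff] at hz
    push_neg at hz
    have him : z.im = 0 := hz.2
    have : z = z.re • (1:ℂ) := by
      apply Complex.ext <;> simp [him]
    rw [this]
    exact Submodule.smul_mem _ _ (Submodule.mem_span_singleton_self _)
  refine measure_mono_null hsub (Measure.addHaar_submodule _ _ ?_)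
  intro htop
  have : (Complex.I) ∈ (Submodule.span ℝ {(1:ℂ)}) := htop ▸ Submodule.mem_top
  rw [Submodule.mem_span_singleton] at this
  obtain ⟨r, hr⟩ := this
  have := congrArg Complex.im hr
  simp at this

/-- **Density blow-up at a pole.**  If `f` has a pole `q` of order `M ≥ 1` and the density
`ρ` of an absolutely continuous invariant measure `μ = ρ·m` is bounded away from zero
near `q`, then `ρ(z) > c / |z|^{2 + 2/M}` for almost all large `|z|`. -/
theorem density_lower_bound_at_pole {𝕊 : Type} [MetricSpace 𝕊] [CompactSpace 𝕊]
    (S : SphereModel 𝕊) (f : 𝕊 → 𝕊) (hf : S.MeromorphicDyn f)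
    (q : ℂ) (M : ℕ) (hM : 1 ≤ M)
    (hqpole : ∃ g : ℂ → ℂ, AnalyticAt ℂ g q ∧ g q ≠ 0 ∧
      ∀ᶠ w in 𝓝[≠] q, f (S.ι w) = S.ι (g w / (w - q) ^ M))
    (ρ : ℂ → ℝ) (μ : Measure ℂ)
    (hμ : μ = MeasureTheory.volume.withDensity (fun z => ENNReal.ofReal (ρ z)))
    (hinv : ∀ E : Set ℂ, MeasurableSet E → μ {z : ℂ | f (S.ι z) ∈ S.ι '' E} = μ E)
    (hlow : ∃ δ > (0:ℝ), ∃ b > (0:ℝ), ∀ z ∈ Metric.ball q δ, b ≤ ρ z) :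
    ∃ c > (0:ℝ), ∃ r₀ > (0:ℝ), ∀ᵐ z ∂MeasureTheory.volume,
      r₀ ≤ ‖z‖ → c / ‖z‖ ^ ((2 : ℝ) + 2 / M) < ρ z := by
  classical
  obtain ⟨g, hg, hgq, heq⟩ := hqpole
  obtain ⟨δ, hδ, b, hb, hρb⟩ := hlow
  have hMpos : 0 < M := hM
  have hMne : M ≠ 0 := Nat.pos_iff_ne_zero.mp hMpos
  have hMC : (M:ℂ) ≠ 0 := by exact_mod_cast hMne
  have hMR : (0:ℝ) < M := by exact_mod_cast hMpos
  obtain ⟨d, hd⟩ := IsAlgClosed.exists_pow_nat_eq ((g q)⁻¹) hMpos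
  have hd0 : d ≠ 0 := by
    intro h
    rw [h, zero_pow hMne] at hd
    exact hgq (inv_eq_zero.mp hd.symm)
  set Gm : ℂ → ℂ := fun w => Complex.exp (-(M:ℂ)⁻¹ * Complex.log (g w / g q)) * d with hGm
  set eta : ℂ → ℂ := fun w => (w - q) * Gm w with heta
  have e1 : ∀ᶠ w in 𝓝 q, w ∈ Metric.ball q δ :=
    isOpen_ball.eventually_mem (mem_ball_self hδ)
  have e2 : ∀ᶠ w in 𝓝 q, w ≠ q → f (S.ι w) = S.ι (g w / (w - q) ^ M) := by
    have h := eventually_nhdsWithin_iff.mp heq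
    exact h.mono (fun w hw hwq => hw hwq)
  have e3 : ∀ᶠ w in 𝓝 q, 0 < (g w / g q).re := by
    have hcont : ContinuousAt (fun w => g w / g q) q := (hg.continuousAt).div_const _
    have h1 : (0:ℝ) < ((g q / g q) : ℂ).re := by rw [div_self hgq]; norm_num
    have hmem : {x : ℂ | 0 < x.re} ∈ 𝓝 (g q / g q) :=
      (isOpen_lt continuous_const Complex.continuous_re).mem_nhds h1
    exact hcont.eventually_mem hmem
  have e4 : ∀ᶠ w in 𝓝 q, AnalyticAt ℂ g w := hg.eventually_analyticAt
  obtain ⟨ε, hε, hP⟩ := Metric.eventually_nhds_iff.mp ((e1.and e2).and (e3.and e4))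
  have hfact : ∀ w ∈ Metric.ball q ε,
      (w ∈ Metric.ball q δ) ∧ (w ≠ q → f (S.ι w) = S.ι (g w / (w - q) ^ M)) ∧
        0 < (g w / g q).re ∧ AnalyticAt ℂ g w := by
    intro w hw
    have h := hP (mem_ball.mp hw)
    exact ⟨h.1.1, h.1.2, h.2.1, h.2.2⟩
  have hg0 : ∀ w ∈ Metric.ball q ε, g w ≠ 0 := by
    intro w hw h0
    have h := (hfact w hw).2.2.1
    rw [h0] at h
    simp at h
  have hratio0 : ∀ w ∈ Metric.ball q ε, g w / g q ≠ 0 :=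
    fun w hw => div_ne_zero (hg0 w hw) hgq
  have hslit : ∀ w ∈ Metric.ball q ε, g w / g q ∈ Complex.slitPlane :=
    fun w hw => Or.inl (hfact w hw).2.2.1
  have hGmpow : ∀ w ∈ Metric.ball q ε, Gm w ^ M = (g w)⁻¹ := by
    intro w hw
    have h1 : Complex.exp (-(M:ℂ)⁻¹ * Complex.log (g w / g q)) ^ M
        = Complex.exp ((M:ℂ) * (-(M:ℂ)⁻¹ * Complex.log (g w / g q))) := by
      exact (Complex.exp_nat_mul (-(M:ℂ)⁻¹ * Complex.log (g w / g q)) M).symm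
    have h2 : (M:ℂ) * (-(M:ℂ)⁻¹ * Complex.log (g w / g q)) = - Complex.log (g w / g q) := by
      field_simp
    rw [hGm, mul_pow, h1, h2, Complex.exp_neg, Complex.exp_log (hratio0 w hw), hd]
    field_simp [hg0 w hw, hgq]
  have hetaM : ∀ w ∈ Metric.ball q ε, eta w ^ M = (w - q) ^ M * (g w)⁻¹ := by
    intro w hw
    rw [heta, mul_pow, hGmpow w hw]
  have hphi : ∀ w ∈ Metric.ball q ε, w ≠ q → g w / (w - q) ^ M = (eta w ^ M)⁻¹ := by
    intro w hw hwq
    rw [hetaM w hw, mul_inv, inv_inv]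
    rw [div_eq_mul_inv, mul_comm]
  have hetadiffat : ∀ w ∈ Metric.ball q ε, DifferentiableAt ℂ eta w := by
    intro w hw
    have hgw : DifferentiableAt ℂ g w := ((hfact w hw).2.2.2).differentiableAt
    have hlog : DifferentiableAt ℂ (fun w => Complex.log (g w / g q)) w :=
      (hgw.div_const _).clog (hslit w hw)
    exact (differentiableAt_id.sub_const q).mul (((hlog.const_mul _).cexp).mul_const d)
  have hetadiff : DifferentiableOn ℂ eta (Metric.ball q ε) :=
    fun w hw => (hetadiffat w hw).differentiableWithinAt
  have hetaan : AnalyticOnNhd ℂ eta (Metric.ball q ε) := hetadiff.analyticOnNhd isOpen_ball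
  have hetaq : eta q = 0 := by simp [heta]
  have hGmq : Gm q = d := by
    rw [hGm]
    simp [div_self hgq, Complex.log_one]
  have hGmdiffq : DifferentiableAt ℂ Gm q := by
    have hgw : DifferentiableAt ℂ g q := hg.differentiableAt
    have hlog : DifferentiableAt ℂ (fun w => Complex.log (g w / g q)) q :=
      (hgw.div_const _).clog (hslit q (mem_ball_self hε))
    exact ((hlog.const_mul _).cexp).mul_const d
  have hetad : HasDerivAt eta d q := by
    have h1 : HasDerivAt (fun w : ℂ => w - q) 1 q := (hasDerivAt_id q).sub_const q
    have h2 : HasDerivAt Gm (deriv Gm q) q := hGmdiffq.hasDerivAt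
    have h3 : HasDerivAt (fun w => (w - q) * Gm w) (1 * Gm q + (q - q) * deriv Gm q) q :=
      h1.mul h2
    simpa [heta, hGmq] using h3
  obtain ⟨pser, hpser⟩ := hetaan q (mem_ball_self hε)
  have hstrict : HasStrictDerivAt eta d q := by
    have h1 := hpser.hasStrictDerivAt
    rwa [← hpser.deriv, hetad.deriv] at h1
  set Fh := (hstrict.hasStrictFDerivAt_equiv hd0).toOpenPartialHomeomorph eta with hFh
  have hFcoe : (Fh : ℂ → ℂ) = eta := rfl
  have hqsrc : q ∈ Fh.source :=
    (hstrict.hasStrictFDerivAt_equiv hd0).mem_toOpenPartialHomeomorph_source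
  have hderivan : AnalyticOnNhd ℂ (deriv eta) (Metric.ball q ε) := hetaan.deriv
  have hderivcont : ContinuousOn (deriv eta) (Metric.ball q ε) := hderivan.continuousOn
  have hca : ContinuousAt (deriv eta) q :=
    hderivcont.continuousAt (isOpen_ball.mem_nhds (mem_ball_self hε))
  have habsd : 0 < ‖d‖ := norm_pos_iff.mpr hd0
  have e5 : ∀ᶠ w in 𝓝 q, dist (deriv eta w) d < ‖d‖ / 2 := by
    have hmem : Metric.ball d (‖d‖ / 2) ∈ 𝓝 (deriv eta q) := by
      rw [hetad.deriv]
      exact Metric.ball_mem_nhds _ (by positivity)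
    exact (hca.eventually_mem hmem).mono (fun w hw => mem_ball.mp hw)
  have e6 : ∀ᶠ w in 𝓝 q, w ∈ Fh.source := Fh.open_source.eventually_mem hqsrc
  have e7 : ∀ᶠ w in 𝓝 q, w ∈ Metric.ball q ε := isOpen_ball.eventually_mem (mem_ball_self hε)
  obtain ⟨ε₂, hε₂, hP2⟩ := Metric.eventually_nhds_iff.mp ((e5.and e6).and e7)
  set L : ℝ := 2 * ‖d‖ with hL
  have hL0 : 0 < L := by positivity
  have hsub2 : Metric.ball q ε₂ ⊆ Fh.source := fun w hw => (hP2 (mem_ball.mp hw)).1.2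
  have hsub2' : Metric.ball q ε₂ ⊆ Metric.ball q ε := fun w hw => (hP2 (mem_ball.mp hw)).2
  have hderiv_ne : ∀ w ∈ Metric.ball q ε₂, deriv eta w ≠ 0 := by
    intro w hw h0
    have h1 := (hP2 (mem_ball.mp hw)).1.1
    rw [h0] at h1
    rw [dist_eq_norm, zero_sub, norm_neg] at h1
    linarith
  have hderiv_le : ∀ w ∈ Metric.ball q ε₂, ‖deriv eta w‖ ≤ L := by
    intro w hw
    have h1 := (hP2 (mem_ball.mp hw)).1.1
    have h2 := norm_sub_norm_le (deriv eta w) d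
    rw [← dist_eq_norm] at h2
    rw [hL]
    linarith
  have hUopen : IsOpen (Fh '' Metric.ball q ε₂) :=
    Fh.isOpen_image_of_subset_source isOpen_ball hsub2
  have h0U : (0:ℂ) ∈ Fh '' Metric.ball q ε₂ := ⟨q, mem_ball_self hε₂, by rw [hFcoe, hetaq]⟩
  obtain ⟨ε₁, hε₁, hball1⟩ := Metric.isOpen_iff.mp hUopen 0 h0U
  set r₁ : ℝ := (ε₁⁻¹) ^ M with hr₁def
  have hr₁ : 0 < r₁ := by positivity
  set jmap : ℂ → ℂ := fun z => (z⁻¹) ^ ((M:ℂ))⁻¹ with hjmap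
  set hbr : ℂ → ℂ := fun z => Fh.symm (jmap z) with hhbr
  set Dset : Set ℂ := {z : ℂ | r₁ < ‖z‖} ∩ Complex.slitPlane with hDset
  set dc : ℂ → ℂ := fun z => (deriv eta (Fh.symm ((z⁻¹) ^ ((M:ℂ))⁻¹)))⁻¹ *
      (((M:ℂ))⁻¹ * (z⁻¹) ^ (((M:ℂ))⁻¹ - 1) * (-(z ^ 2)⁻¹)) with hdc
  have hbeta : ∀ z : ℂ, hbr z = Fh.symm (jmap z) := fun z => rfl
  have hmain : ∀ z ∈ Dset,
      hbr z ∈ Metric.ball q ε₂ ∧ f (S.ι (hbr z)) = S.ι z ∧ HasDerivAt hbr (dc z) z ∧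
        (L * M)⁻¹ * ‖z‖ ^ (-(1:ℝ) - (M:ℝ)⁻¹) ≤ ‖dc z‖ ∧
        eta (hbr z) = jmap z := by
    rintro z ⟨hzr, hzslit⟩
    have hzr' : r₁ < ‖z‖ := hzr
    have habs0 : 0 < ‖z‖ := lt_trans hr₁ hzr'
    have hz0 : z ≠ 0 := by
      intro h0
      rw [h0] at habs0
      simp at habs0
    have hzinvslit : z⁻¹ ∈ Complex.slitPlane := auxInvSlit hzslit
    have habsj : ‖jmap z‖ = ‖z‖ ^ (-(M:ℝ)⁻¹) := by
      rw [hjmap]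
      rw [Complex.norm_cpow_inv_nat, norm_inv, Real.inv_rpow (norm_nonneg z),
        ← Real.rpow_neg (norm_nonneg z)]
    have hjlt : ‖jmap z‖ < ε₁ := by
      rw [habsj]
      have h2 : ‖z‖ ^ (-(M:ℝ)⁻¹) < r₁ ^ (-(M:ℝ)⁻¹) :=
        Real.rpow_lt_rpow_of_neg hr₁ hzr' (neg_lt_zero.mpr (by positivity))
      have h3 : r₁ ^ (-(M:ℝ)⁻¹) = ε₁ := by
        rw [hr₁def, ← Real.rpow_natCast (ε₁⁻¹) M, ← Real.rpow_mul (by positivity : (0:ℝ) ≤ ε₁⁻¹)]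
        have : (M:ℝ) * (-(M:ℝ)⁻¹) = -1 := by field_simp
        rw [this, Real.rpow_neg_one, inv_inv]
      linarith
    have hjU : jmap z ∈ Fh '' Metric.ball q ε₂ := by
      apply hball1
      rw [mem_ball, dist_zero_right]
      exact hjlt
    obtain ⟨v, hv, hvF⟩ := hjU
    have hvsrc : v ∈ Fh.source := hsub2 hv
    have hsymmj : Fh.symm (jmap z) = v := by rw [← hvF, Fh.left_inv hvsrc]
    have hbrmem : hbr z ∈ Metric.ball q ε₂ := by rw [hbeta z, hsymmj]; exact hv
    have hbrmem' : hbr z ∈ Metric.ball q ε := hsub2' hbrmem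
    have hetahbr : eta (hbr z) = jmap z := by
      rw [hbeta z, hsymmj, ← hFcoe, hvF]
    have hjT : jmap z ∈ Fh.target := by rw [← hvF]; exact Fh.map_source hvsrc
    have hj0 : jmap z ≠ 0 := by
      intro h0
      rw [h0] at habsj
      simp only [norm_zero] at habsj
      have := Real.rpow_pos_of_pos habs0 (-(M:ℝ)⁻¹)
      rw [← habsj] at this
      exact lt_irrefl _ this
    have hpowj : (jmap z) ^ M = z⁻¹ := Complex.cpow_nat_inv_pow _ hMne
    have hbrq : hbr z ≠ q := by
      intro h0
      apply hj0
      rw [← hetahbr, h0, hetaq]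
    have himg : f (S.ι (hbr z)) = S.ι z := by
      rw [(hfact _ hbrmem').2.1 hbrq, hphi _ hbrmem' hbrq, hetahbr, hpowj, inv_inv]
    have hjder : HasDerivAt jmap (((M:ℂ))⁻¹ * (z⁻¹) ^ (((M:ℂ))⁻¹ - 1) * (-(z ^ 2)⁻¹)) z := by
      have h := (hasDerivAt_inv hz0).cpow_const (c := ((M:ℂ))⁻¹) hzinvslit
      simpa [hjmap] using h
    have hetader : HasDerivAt eta (deriv eta (hbr z)) (hbr z) :=
      ((hetadiffat _ hbrmem').hasDerivAt)
    have hdne : deriv eta (hbr z) ≠ 0 := hderiv_ne _ hbrmem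
    have hsymder : HasDerivAt Fh.symm ((deriv eta (hbr z))⁻¹) (jmap z) := by
      apply Fh.hasDerivAt_symm hjT hdne
      exact hetader
    have hbrder : HasDerivAt hbr (dc z) z := by
      have h : HasDerivAt (fun y => Fh.symm (jmap y)) ((deriv eta (hbr z))⁻¹ *
          (((M:ℂ))⁻¹ * (z⁻¹) ^ (((M:ℂ))⁻¹ - 1) * (-(z ^ 2)⁻¹))) z := hsymder.comp z hjder
      simpa [hhbr, hdc, hjmap, Function.comp] using h
    refine ⟨hbrmem, himg, hbrder, ?_, hetahbr⟩
    have habs1 : ‖(z⁻¹) ^ (((M:ℂ))⁻¹ - 1)‖ = ‖z‖ ^ ((1:ℝ) - (M:ℝ)⁻¹) := by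
      have hcast : (((M:ℂ))⁻¹ - 1) = ((((M:ℝ)⁻¹ - 1 : ℝ)) : ℂ) := by push_cast; ring
      rw [hcast, Complex.norm_cpow_real, norm_inv, Real.inv_rpow (norm_nonneg z),
        ← Real.rpow_neg (norm_nonneg z)]
      ring_nf
    have habsdc : ‖dc z‖ = (‖deriv eta (hbr z)‖)⁻¹ *
        ((M:ℝ)⁻¹ * (‖z‖ ^ ((1:ℝ) - (M:ℝ)⁻¹) * (‖z‖ ^ (2:ℕ))⁻¹)) := by
      rw [hdc]
      simp only [norm_mul, norm_inv, norm_neg, norm_pow, Complex.norm_natCast]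
      rw [habs1]
      ring
    have hpow2 : ((‖z‖ ^ (2:ℕ) : ℝ))⁻¹ = ‖z‖ ^ (-(2:ℝ)) := by
      rw [← Real.rpow_natCast (‖z‖) 2, ← Real.rpow_neg (norm_nonneg z)]
      norm_num
    have hcomb : ‖z‖ ^ ((1:ℝ) - (M:ℝ)⁻¹) * ‖z‖ ^ (-(2:ℝ))
        = ‖z‖ ^ (-(1:ℝ) - (M:ℝ)⁻¹) := by
      rw [← Real.rpow_add habs0]
      ring_nf
    have hderpos : 0 < ‖deriv eta (hbr z)‖ := norm_pos_iff.mpr hdne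
    have hderle : ‖deriv eta (hbr z)‖ ≤ L := hderiv_le _ hbrmem
    rw [habsdc, hpow2, hcomb, mul_inv]
    have hle : L⁻¹ ≤ (‖deriv eta (hbr z)‖)⁻¹ := by
      apply inv_anti₀ hderpos hderle
    have hrp : (0:ℝ) < ‖z‖ ^ (-(1:ℝ) - (M:ℝ)⁻¹) := Real.rpow_pos_of_pos habs0 _
    calc L⁻¹ * (M:ℝ)⁻¹ * ‖z‖ ^ (-(1:ℝ) - (M:ℝ)⁻¹)
        ≤ (‖deriv eta (hbr z)‖)⁻¹ * (M:ℝ)⁻¹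
            * ‖z‖ ^ (-(1:ℝ) - (M:ℝ)⁻¹) := by
          apply mul_le_mul_of_nonneg_right (mul_le_mul_of_nonneg_right hle (by positivity)) hrp.le
      _ = (‖deriv eta (hbr z)‖)⁻¹
            * ((M:ℝ)⁻¹ * ‖z‖ ^ (-(1:ℝ) - (M:ℝ)⁻¹)) := by ring
  have hzinj : Set.InjOn hbr Dset := by
    intro z₁ h₁ z₂ h₂ hE
    have e₁ := (hmain z₁ h₁).2.2.2.2
    have e₂ := (hmain z₂ h₂).2.2.2.2
    have hjj : jmap z₁ = jmap z₂ := by rw [← e₁, ← e₂, hE]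
    simp only [hjmap] at hjj
    have hp : z₁⁻¹ = z₂⁻¹ := by
      rw [← Complex.cpow_nat_inv_pow z₁⁻¹ hMne, ← Complex.cpow_nat_inv_pow z₂⁻¹ hMne]
      exact congrArg (· ^ M) hjj
    exact inv_injective hp
  have hcov : ∀ t : Set ℂ, MeasurableSet t → t ⊆ Dset →
      ENNReal.ofReal (((L * M)^2)⁻¹) * ∫⁻ z in t, ENNReal.ofReal
        (‖z‖ ^ (-(2:ℝ) - 2 * (M:ℝ)⁻¹)) ≤ volume (hbr '' t) := by
    intro t ht htD
    have hfder : ∀ z ∈ t, HasFDerivWithinAt hbr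
        ((ContinuousLinearMap.smulRight (1 : ℂ →L[ℂ] ℂ) (dc z)).restrictScalars ℝ) t z :=
      fun z hz => (((hasDerivAt_iff_hasFDerivAt.mp
        ((hmain z (htD hz)).2.2.1)).restrictScalars ℝ).hasFDerivWithinAt)
    have hinj : Set.InjOn hbr t := hzinj.mono htD
    have hcv := lintegral_image_eq_lintegral_abs_det_fderiv_mul volume ht hfder hinj (fun _ => 1)
    rw [setLIntegral_one] at hcv
    rw [hcv, ← lintegral_const_mul' _ _ ENNReal.ofReal_ne_top]
    apply setLIntegral_mono' ht
    intro z hz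
    rw [mul_one, auxDet, ← ENNReal.ofReal_mul (by positivity)]
    apply ENNReal.ofReal_le_ofReal
    rw [abs_of_nonneg (Complex.normSq_nonneg _)]
    have h1 := (hmain z (htD hz)).2.2.2.1
    have h2 : Complex.normSq (dc z) = ‖dc z‖ ^ (2:ℕ) := (Complex.sq_norm _).symm
    have habs0 : (0:ℝ) < ‖z‖ := lt_trans hr₁ (htD hz).1
    have h3 : ((L*M)⁻¹ * ‖z‖ ^ (-(1:ℝ) - (M:ℝ)⁻¹)) ^ (2:ℕ)
        ≤ ‖dc z‖ ^ (2:ℕ) :=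
      pow_le_pow_left₀ (by positivity) h1 2
    rw [h2]
    refine le_trans (le_of_eq ?_) h3
    have hexp : ‖z‖ ^ (-(2:ℝ) - 2*(M:ℝ)⁻¹)
        = (‖z‖ ^ (-(1:ℝ) - (M:ℝ)⁻¹)) ^ (2:ℕ) := by
      rw [← Real.rpow_natCast (‖z‖ ^ (-(1:ℝ) - (M:ℝ)⁻¹)) 2,
        ← Real.rpow_mul (norm_nonneg z)]
      norm_num
      ring_nf
    rw [hexp, ← inv_pow, ← mul_pow]
  set r₂ : ℝ := r₁ + 1 with hr₂def
  have hr₂ : 0 < r₂ := by positivity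
  have hstar : ∀ E : Set ℂ, MeasurableSet E → (∀ z ∈ E, r₂ ≤ ‖z‖) →
      ENNReal.ofReal b * (ENNReal.ofReal (((L * M)^2)⁻¹) *
        ∫⁻ z in E, ENNReal.ofReal (‖z‖ ^ (-(2:ℝ) - 2*(M:ℝ)⁻¹))) ≤ μ E := by
    intro E hE hEfar
    have ht : MeasurableSet (E ∩ Complex.slitPlane) :=
      hE.inter Complex.isOpen_slitPlane.measurableSet
    have htD : E ∩ Complex.slitPlane ⊆ Dset := by
      rintro z ⟨hz1, hz2⟩
      refine ⟨?_, hz2⟩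
      have := hEfar z hz1
      show r₁ < ‖z‖
      rw [hr₂def] at this
      linarith
    have htE : (E ∩ Complex.slitPlane : Set ℂ) =ᵐ[volume] E := by
      rw [MeasureTheory.ae_eq_set]
      constructor
      · apply measure_mono_null (t := (∅ : Set ℂ)) ?_ measure_empty
        intro z hz
        exact absurd hz.1.1 (fun h => hz.2 h)
      · apply measure_mono_null ?_ auxSlitCompl
        intro z hz
        exact fun hs => hz.2 ⟨hz.1, hs⟩
    have himgsub : hbr '' (E ∩ Complex.slitPlane) ⊆ {z : ℂ | f (S.ι z) ∈ S.ι '' E} := by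
      rintro x ⟨z, hz, rfl⟩
      exact ⟨z, hz.1, ((hmain z (htD hz)).2.1).symm⟩
    have himgball : hbr '' (E ∩ Complex.slitPlane) ⊆ Metric.ball q δ := by
      rintro x ⟨z, hz, rfl⟩
      exact (hfact _ (hsub2' (hmain z (htD hz)).1)).1
    have himgmeas : MeasurableSet (hbr '' (E ∩ Complex.slitPlane)) := by
      apply MeasurableSet.image_of_continuousOn_injOn ht
      · intro z hz
        exact ((hmain z (htD hz)).2.2.1).continuousAt.continuousWithinAt
      · exact hzinj.mono htD
    calc ENNReal.ofReal b * (ENNReal.ofReal (((L*M)^2)⁻¹) *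
          ∫⁻ z in E, ENNReal.ofReal (‖z‖ ^ (-(2:ℝ) - 2*(M:ℝ)⁻¹)))
        = ENNReal.ofReal b * (ENNReal.ofReal (((L*M)^2)⁻¹) *
          ∫⁻ z in E ∩ Complex.slitPlane,
            ENNReal.ofReal (‖z‖ ^ (-(2:ℝ) - 2*(M:ℝ)⁻¹))) := by
          rw [Measure.restrict_congr_set htE]
      _ ≤ ENNReal.ofReal b * volume (hbr '' (E ∩ Complex.slitPlane)) := by
          gcongr
          exact hcov _ ht htD
      _ = ∫⁻ _ in hbr '' (E ∩ Complex.slitPlane), ENNReal.ofReal b ∂volume :=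
          (setLIntegral_const _ _).symm
      _ ≤ ∫⁻ x in hbr '' (E ∩ Complex.slitPlane), ENNReal.ofReal (ρ x) ∂volume := by
          apply setLIntegral_mono' himgmeas
          intro x hx
          exact ENNReal.ofReal_le_ofReal (hρb x (himgball hx))
      _ = μ (hbr '' (E ∩ Complex.slitPlane)) := by rw [hμ, withDensity_apply _ himgmeas]
      _ ≤ μ {z : ℂ | f (S.ι z) ∈ S.ι '' E} := measure_mono himgsub
      _ = μ E := hinv E hE
  have hexpneg : (-(2:ℝ) - 2*(M:ℝ)⁻¹) ≤ 0 := by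
    have : (0:ℝ) < (M:ℝ)⁻¹ := by positivity
    linarith
  set c : ℝ := b * (((L*M)^2)⁻¹) / 2 with hcdef
  have hc0 : 0 < c := by positivity
  refine ⟨c, hc0, r₂, hr₂, ?_⟩
  rw [ae_iff]
  have hsetEq : {z : ℂ | ¬ (r₂ ≤ ‖z‖ → c / ‖z‖ ^ ((2:ℝ) + 2 / M) < ρ z)}
      = {z : ℂ | r₂ ≤ ‖z‖ ∧ ρ z ≤ c / ‖z‖ ^ ((2:ℝ) + 2 / M)} := by
    ext z
    simp only [Set.mem_setOf_eq, Classical.not_imp, not_lt]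
  rw [hsetEq]
  set A : Set ℂ := {z : ℂ | r₂ ≤ ‖z‖ ∧ ρ z ≤ c / ‖z‖ ^ ((2:ℝ) + 2 / M)}
    with hAdef
  have hcover : A ⊆ ⋃ n : ℕ, (A ∩ Metric.closedBall 0 n) := by
    intro z hz
    obtain ⟨n, hn⟩ := exists_nat_ge (‖z‖)
    refine Set.mem_iUnion.mpr ⟨n, hz, ?_⟩
    rw [Metric.mem_closedBall, Complex.dist_eq, sub_zero]
    exact le_trans (le_abs_self _) (by rwa [abs_of_nonneg (norm_nonneg z)])
  refine measure_mono_null hcover (measure_iUnion_null fun n => ?_)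
  set B : Set ℂ := toMeasurable volume (A ∩ Metric.closedBall 0 n) ∩
      (Metric.closedBall 0 n ∩ {z : ℂ | r₂ ≤ ‖z‖}) with hBdef
  have habsmeas : MeasurableSet {z : ℂ | r₂ ≤ ‖z‖} :=
    (isClosed_le continuous_const continuous_norm).measurableSet
  have hBmeas : MeasurableSet B :=
    (measurableSet_toMeasurable _ _).inter (measurableSet_closedBall.inter habsmeas)
  have hsubAB : A ∩ Metric.closedBall 0 n ⊆ B := fun z hz =>
    ⟨subset_toMeasurable _ _ hz, hz.2, hz.1.1⟩
  have hBA : volume B = volume (A ∩ Metric.closedBall 0 n) :=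
    le_antisymm (le_trans (measure_mono Set.inter_subset_left)
      (le_of_eq (measure_toMeasurable _))) (measure_mono hsubAB)
  have hBfin : volume B < ⊤ :=
    lt_of_le_of_lt (measure_mono (fun z hz => hz.2.1)) measure_closedBall_lt_top
  have hBfar : ∀ z ∈ B, r₂ ≤ ‖z‖ := fun z hz => hz.2.2
  have hhull : ∀ W : Set ℂ, MeasurableSet W → W ⊆ B →
      W ∩ (A ∩ Metric.closedBall 0 n) = ∅ → volume W = 0 := by
    intro W hW hWB hWA
    by_cases hB0 : volume B = 0
    · exact measure_mono_null hWB hB0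
    have h1 : A ∩ Metric.closedBall 0 n ⊆ B \ W := by
      intro z hz
      refine ⟨hsubAB hz, fun hzW => ?_⟩
      have : z ∈ W ∩ (A ∩ Metric.closedBall 0 n) := ⟨hzW, hz⟩
      rw [hWA] at this
      exact this
    have h2 : volume B ≤ volume (B \ W) := by
      rw [hBA]
      exact measure_mono h1
    by_contra hW0
    have h3 : volume (B \ W) < volume B := by
      rw [measure_diff hWB hW.nullMeasurableSet
        (ne_top_of_lt (lt_of_le_of_lt (measure_mono hWB) hBfin))]
      exact ENNReal.sub_lt_self (ne_of_lt hBfin) hB0 hW0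
    exact absurd h2 (not_le.mpr h3)
  set I := ∫⁻ z in B, ENNReal.ofReal (‖z‖ ^ (-(2:ℝ) - 2*(M:ℝ)⁻¹)) with hIdef
  have hIub : I ≤ ENNReal.ofReal (r₂ ^ (-(2:ℝ) - 2*(M:ℝ)⁻¹)) * volume B := by
    rw [hIdef, ← setLIntegral_const]
    apply setLIntegral_mono' hBmeas
    intro z hz
    apply ENNReal.ofReal_le_ofReal
    exact Real.rpow_le_rpow_of_nonpos hr₂ (hBfar z hz) hexpneg
  have hIfin : I ≠ ⊤ := by
    apply ne_top_of_le_ne_top _ hIub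
    exact ENNReal.mul_ne_top ENNReal.ofReal_ne_top (ne_of_lt hBfin)
  have hIlb : ENNReal.ofReal (((n:ℝ)+1) ^ (-(2:ℝ) - 2*(M:ℝ)⁻¹)) * volume B ≤ I := by
    rw [hIdef, ← setLIntegral_const]
    apply setLIntegral_mono' hBmeas
    intro z hz
    apply ENNReal.ofReal_le_ofReal
    have h1 : ‖z‖ ≤ (n:ℝ)+1 := by
      have h2 := hz.2.1
      rw [Metric.mem_closedBall, Complex.dist_eq, sub_zero] at h2
      linarith
    exact Real.rpow_le_rpow_of_nonpos (lt_of_lt_of_le hr₂ (hBfar z hz)) h1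
      hexpneg
  have h1 := hstar B hBmeas hBfar
  obtain ⟨ψ, hψm, hψle, hψeq⟩ :=
    exists_measurable_le_lintegral_eq (volume.restrict B) (fun z => ENNReal.ofReal (ρ z))
  have hμB : μ B = ∫⁻ z in B, ψ z ∂volume := by
    rw [hμ, withDensity_apply _ hBmeas]
    exact hψeq
  have hWmeas : MeasurableSet {z : ℂ | z ∈ B ∧
      ENNReal.ofReal (c * ‖z‖ ^ (-(2:ℝ) - 2*(M:ℝ)⁻¹)) < ψ z} := by
    have hmble : Measurable fun z : ℂ =>
        ENNReal.ofReal (c * ‖z‖ ^ (-(2:ℝ) - 2*(M:ℝ)⁻¹)) := by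
      apply Measurable.ennreal_ofReal
      have h1 : Measurable fun z : ℂ => ‖z‖ ^ (-(2:ℝ) - 2*(M:ℝ)⁻¹) :=
        Measurable.pow (continuous_norm.measurable) measurable_const
      exact h1.const_mul c
    have h2 : MeasurableSet {z : ℂ |
        ENNReal.ofReal (c * ‖z‖ ^ (-(2:ℝ) - 2*(M:ℝ)⁻¹)) < ψ z} :=
      measurableSet_lt hmble hψm
    exact hBmeas.inter h2
  have hWnull : volume {z : ℂ | z ∈ B ∧
      ENNReal.ofReal (c * ‖z‖ ^ (-(2:ℝ) - 2*(M:ℝ)⁻¹)) < ψ z} = 0 := by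
    apply hhull _ hWmeas (fun z hz => hz.1)
    rw [Set.eq_empty_iff_forall_notMem]
    rintro z ⟨hzW, hzA⟩
    have habs0 : 0 < ‖z‖ := lt_of_lt_of_le hr₂ hzA.1.1
    have hkey : c / ‖z‖ ^ ((2:ℝ) + 2/(M:ℝ))
        = c * ‖z‖ ^ (-(2:ℝ) - 2*(M:ℝ)⁻¹) := by
      rw [div_eq_mul_inv, ← Real.rpow_neg (norm_nonneg z)]
      congr 1
      ring
    have h5 : ψ z ≤ ENNReal.ofReal (c * ‖z‖ ^ (-(2:ℝ) - 2*(M:ℝ)⁻¹)) := by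
      refine le_trans (hψle z) (ENNReal.ofReal_le_ofReal ?_)
      rw [← hkey]
      exact hzA.1.2
    exact absurd hzW.2 (not_lt.mpr h5)
  have hψub : ∫⁻ z in B, ψ z ∂volume ≤ ENNReal.ofReal c * I := by
    have hae : ∀ᵐ z ∂(volume.restrict B),
        ψ z ≤ ENNReal.ofReal (c * ‖z‖ ^ (-(2:ℝ) - 2*(M:ℝ)⁻¹)) := by
      rw [ae_restrict_iff' hBmeas, ae_iff]
      apply measure_mono_null _ hWnull
      intro z hz
      simp only [Set.mem_setOf_eq, Classical.not_imp, not_le] at hz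
      exact ⟨hz.1, hz.2⟩
    calc ∫⁻ z in B, ψ z ∂volume
        ≤ ∫⁻ z in B, ENNReal.ofReal (c * ‖z‖ ^ (-(2:ℝ) - 2*(M:ℝ)⁻¹)) ∂volume :=
          lintegral_mono_ae hae
      _ = ENNReal.ofReal c * I := by
          rw [hIdef, ← lintegral_const_mul' _ _ ENNReal.ofReal_ne_top]
          apply lintegral_congr
          intro z
          rw [ENNReal.ofReal_mul hc0.le]
  have hcI : ENNReal.ofReal b * (ENNReal.ofReal (((L*M)^2)⁻¹) * I)
      = 2 * (ENNReal.ofReal c * I) := by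
    rw [← mul_assoc, ← ENNReal.ofReal_mul hb.le,
      show (2:ℝ≥0∞) = ENNReal.ofReal (2:ℝ) by norm_num, ← mul_assoc,
      ← ENNReal.ofReal_mul (by norm_num)]
    congr 2
    rw [hcdef]
    ring
  have hchain : 2 * (ENNReal.ofReal c * I) ≤ ENNReal.ofReal c * I := by
    calc 2 * (ENNReal.ofReal c * I)
        = ENNReal.ofReal b * (ENNReal.ofReal (((L*M)^2)⁻¹) * I) := hcI.symm
      _ ≤ μ B := h1
      _ = ∫⁻ z in B, ψ z ∂volume := hμB
      _ ≤ ENNReal.ofReal c * I := hψub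
  have hI0 : ENNReal.ofReal c * I = 0 := by
    by_contra hne
    have hfin : ENNReal.ofReal c * I ≠ ⊤ := ENNReal.mul_ne_top ENNReal.ofReal_ne_top hIfin
    have hlt : 1 * (ENNReal.ofReal c * I) < 2 * (ENNReal.ofReal c * I) := by
      apply ENNReal.mul_lt_mul_left hne hfin
      norm_num
    rw [one_mul] at hlt
    exact absurd hchain (not_le.mpr hlt)
  have hI0' : I = 0 := by
    rcases mul_eq_zero.mp hI0 with h | h
    · rw [ENNReal.ofReal_eq_zero] at h
      linarith
    · exact h
  have hB0 : volume B = 0 := by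
    have h6 := hIlb
    rw [hI0', le_zero_iff] at h6
    rcases mul_eq_zero.mp h6 with h | h
    · rw [ENNReal.ofReal_eq_zero] at h
      have hpos : (0:ℝ) < ((n:ℝ)+1) ^ (-(2:ℝ) - 2*(M:ℝ)⁻¹) :=
        Real.rpow_pos_of_pos (by positivity) _
      linarith
    · exact h
  exact measure_mono_null hsubAB hB0
end
end
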